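/- Discrete inf-sup stability from projection stability: Let X and Y be finite-dimensional subspaces of a Hilbert space H₀ with duality pairing ⟨·,·⟩ extending the H₀ inner product, embedded in a Gelfand triple H ⊂ H₀ ⊂ H'. Suppose Q : H₀ → Y is the projection defined by ⟨Qv, τ⟩ = ⟨v, τ⟩ for all τ ∈ X, and Q is stable on H: ‖Qv‖_H ≤ c_S ‖v‖_H for all v ∈ H. Then the inf-sup condition holds: for all τ ∈ X, sup_{0≠v∈Y} ⟨τ, v⟩/‖v‖_H ≥ (1/c_S) ‖τ‖_{H'}. -/

import Mathlib

open Matrix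

/-- Discrete inf-sup stability from projection stability in a Gelfand triple
`H ⊂ H₀ ⊂ H'`.  Here `E` models the pivot space `H₀`, whose inner ℝ product
realizes the duality pairing, `Hs` is the subspace `H` with norm `nH`,
`X, Y` are finite-dimensional subspaces, and `Q` is the Petrov–Galerkin
projection onto `Y` tested against `X`. -/
theorem discrete_inf_sup_from_projection_stability
    {E : Type*} [NormedAddCommGroup E] [InnerProductSpace ℝ E]
    (Hs : Submodule ℝ E) (nH : E → ℝ)
    (hnH : ∀ v ∈ Hs, v ≠ 0 → 0 < nH v)
    (X Y : Submodule ℝ E) (hXH : X ≤ Hs) (hYH : Y ≤ Hs)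
    [FiniteDimensional ℝ X] [FiniteDimensional ℝ Y]
    (Q : E → E) (hQY : ∀ v, Q v ∈ Y)
    (hQdef : ∀ v : E, ∀ τ ∈ X, inner ℝ (Q v) τ = (inner ℝ v τ : ℝ))
    (cS : ℝ) (hcS : 0 < cS)
    (hQstab : ∀ v ∈ Hs, nH (Q v) ≤ cS * nH v) :
    ∀ τ ∈ X,
      BddAbove {r : ℝ | ∃ v ∈ Y, v ≠ 0 ∧ r = (inner ℝ τ v : ℝ) / nH v} →
      BddAbove {r : ℝ | ∃ v ∈ Hs, v ≠ 0 ∧ r = (inner ℝ τ v : ℝ) / nH v} →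
      (1 / cS) * sSup {r : ℝ | ∃ v ∈ Hs, v ≠ 0 ∧ r = (inner ℝ τ v : ℝ) / nH v} ≤
        sSup {r : ℝ | ∃ v ∈ Y, v ≠ 0 ∧ r = (inner ℝ τ v : ℝ) / nH v} := by

  intro τ hτ hbY hbH
  set SY := {r : ℝ | ∃ v ∈ Y, v ≠ 0 ∧ r = (inner ℝ τ v : ℝ) / nH v} with hSY
  set SH := {r : ℝ | ∃ v ∈ Hs, v ≠ 0 ∧ r = (inner ℝ τ v : ℝ) / nH v} with hSH
  -- sSup SY is nonnegative
  have hY0 : 0 ≤ sSup SY := by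
    rcases Set.eq_empty_or_nonempty SY with he | ⟨r, v, hvY, hvne, hr⟩
    · rw [he, Real.sSup_empty]
    · rcases le_or_gt 0 r with h0 | h0
      · exact h0.trans (le_csSup hbY ⟨v, hvY, hvne, hr⟩)
      · have hvH := hYH hvY
        have hnv := hnH v hvH hvne
        have hiv : (inner ℝ τ v : ℝ) < 0 := by
          by_contra h
          push_neg at h
          exact absurd (div_nonneg h hnv.le) (by rw [← hr]; exact not_le.2 h0)
        have hnegv : (-v : E) ≠ 0 := neg_ne_zero.2 hvne
        have hnnv := hnH (-v) (hYH (Y.neg_mem hvY)) hnegv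
        have hmem : (inner ℝ τ (-v) : ℝ) / nH (-v) ∈ SY :=
          ⟨-v, Y.neg_mem hvY, hnegv, rfl⟩
        have : 0 ≤ (inner ℝ τ (-v) : ℝ) / nH (-v) := by
          rw [inner_neg_right]
          exact div_nonneg (by linarith) hnnv.le
        exact this.trans (le_csSup hbY hmem)
  rw [div_mul_eq_mul_div, one_mul, div_le_iff₀ hcS, mul_comm]
  apply Real.sSup_le _ (mul_nonneg hcS.le hY0)
  rintro r ⟨v, hvH, hvne, rfl⟩
  have hnv := hnH v hvH hvne
  rcases le_or_gt (inner ℝ τ v : ℝ) 0 with h0 | h0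
  · exact (div_nonpos_of_nonpos_of_nonneg h0 hnv.le).trans (mul_nonneg hcS.le hY0)
  · have hQeq : (inner ℝ τ (Q v) : ℝ) = (inner ℝ τ v : ℝ) := by
      simpa [real_inner_comm] using hQdef v τ hτ
    have hQne : Q v ≠ 0 := by
      intro h
      rw [h, inner_zero_right] at hQeq
      exact absurd hQeq.symm (ne_of_gt h0)
    have hQH : Q v ∈ Hs := hYH (hQY v)
    have hnQ := hnH (Q v) hQH hQne
    have hstab := hQstab v hvH
    have hmem : (inner ℝ τ (Q v) : ℝ) / nH (Q v) ∈ SY := ⟨Q v, hQY v, hQne, rfl⟩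
    have hle : (inner ℝ τ v : ℝ) / nH v ≤ cS * ((inner ℝ τ (Q v) : ℝ) / nH (Q v)) := by
      rw [hQeq, mul_div_assoc', div_le_div_iff₀ hnv hnQ]
      nlinarith
    calc (inner ℝ τ v : ℝ) / nH v ≤ cS * ((inner ℝ τ (Q v) : ℝ) / nH (Q v)) := hle
      _ ≤ cS * sSup SY := by
          exact mul_le_mul_of_nonneg_left (le_csSup hbY hmem) hcS.le
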